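/- arXiv:2205.03253 — 2 statements merged into one kernel-verified Lean document; each statement's English description precedes it below -/
import Mathlib

section
/- Let K be a finite simplicial complex with an injective filtration function f, and let Σ_ε denote, for a fixed n-dimensional homology class [α] born at a and terminating at b (with 0 < ε < (b−a)/2), the set of (n+1)-simplices that terminate [α] in some filtration induced by an injective filtration function within sup-distance ε of f. Then ε ↦ |Σ_ε| is monotonically increasing on (0, (b−a)/2], and any terminal simplex Δ ∈ Σ_ε satisfies f(Δ) ∈ [b − 2ε, b + 2ε]. -/
open scoped BigOperators

/-- A finite simplicial complex on vertex type `V`: a finite family of nonempty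
finite vertex sets closed under passing to nonempty subsets. -/
structure SComplex (V : Type*) where
  faces : Finset (Finset V)
  nonempty_of_mem : ∀ s ∈ faces, s.Nonempty
  down_closed : ∀ s ∈ faces, ∀ t ⊆ s, t.Nonempty → t ∈ faces

variable {V : Type*} [LinearOrder V]

/-- `f` is an injective filtration function on `K`: face-monotone and injective on faces. -/
def IsFiltrationFun (K : SComplex V) (f : Finset V → ℝ) : Prop :=
  (∀ s ∈ K.faces, ∀ t ∈ K.faces, s ⊆ t → f s ≤ f t) ∧
  (∀ s ∈ K.faces, ∀ t ∈ K.faces, f s = f t → s = t)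

/-- The sup-distance between `f` and `g` over the faces of `K` is at most `ε`. -/
def DistLE (K : SComplex V) (f g : Finset V → ℝ) (ε : ℝ) : Prop :=
  ∀ s ∈ K.faces, |f s - g s| ≤ ε

/-- The sublevel subcomplex `K^f_r = f⁻¹((-∞, r])`. -/
noncomputable def sublevel (K : SComplex V) (f : Finset V → ℝ) (r : ℝ) : Finset (Finset V) :=
  K.faces.filter (fun s => f s ≤ r)

variable (𝔽 : Type*) [Field 𝔽]

/-- The simplicial boundary operator on chains (finitely supported functions on
simplices), with signs determined by the linear order on vertices. -/
noncomputable def bdry : (Finset V →₀ 𝔽) →ₗ[𝔽] (Finset V →₀ 𝔽) :=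
  Finsupp.lsum 𝔽 (fun s => ∑ x ∈ s,
    ((-1 : 𝔽) ^ (s.filter (fun y => y < x)).card) • Finsupp.lsingle (s.erase x))

/-- The submodule of `n`-chains supported on simplices of `L` (of cardinality `n+1`). -/
def chainsIn (L : Finset (Finset V)) (n : ℕ) : Submodule 𝔽 (Finset V →₀ 𝔽) where
  carrier := {c | ∀ s ∈ c.support, s ∈ L ∧ s.card = n + 1}
  add_mem' := by
    intro c d hc hd s hs
    rcases Finset.mem_union.mp (Finsupp.support_add hs) with h | h
    · exact hc s h
    · exact hd s h
  zero_mem' := by intro s hs; simp at hs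
  smul_mem' := by
    intro a c hc s hs
    exact hc s (Finsupp.support_smul hs)

/-- `n`-cycles supported in `L`. -/
noncomputable def cyclesIn (L : Finset (Finset V)) (n : ℕ) : Submodule 𝔽 (Finset V →₀ 𝔽) :=
  chainsIn 𝔽 L n ⊓ LinearMap.ker (bdry 𝔽)

/-- `n`-boundaries of `(n+1)`-chains supported in `L`. -/
noncomputable def boundariesIn (L : Finset (Finset V)) (n : ℕ) : Submodule 𝔽 (Finset V →₀ 𝔽) :=
  (chainsIn 𝔽 L (n + 1)).map (bdry 𝔽)

/-- `α` is an `n`-cycle in the subcomplex `L`. -/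
def IsCycleIn (L : Finset (Finset V)) (n : ℕ) (α : Finset V →₀ 𝔽) : Prop :=
  α ∈ cyclesIn 𝔽 L n

/-- The class of `α` is trivial in `H_n(L)`. -/
def TrivialIn (L : Finset (Finset V)) (n : ℕ) (α : Finset V →₀ 𝔽) : Prop :=
  α ∈ boundariesIn 𝔽 L n

/-- `α` and `β` are homologous in `L`. -/
def HomologousIn (L : Finset (Finset V)) (n : ℕ) (α β : Finset V →₀ 𝔽) : Prop :=
  α - β ∈ boundariesIn 𝔽 L n

/-- The homology class `[α] ∈ H_n(K^f_a)` is born at `a`: it is a nontrivial cycle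
at level `a` and does not come from any strictly earlier level. -/
def BornAt (K : SComplex V) (f : Finset V → ℝ) (n : ℕ) (α : Finset V →₀ 𝔽) (a : ℝ) : Prop :=
  IsCycleIn 𝔽 (sublevel K f a) n α ∧ ¬ TrivialIn 𝔽 (sublevel K f a) n α ∧
  ∀ q < a, ¬ ∃ β, IsCycleIn 𝔽 (sublevel K f q) n β ∧ HomologousIn 𝔽 (sublevel K f a) n α β

/-- The class `[α]` terminates at level `b` in the filtration `K^f`. -/
def TerminatesAt (K : SComplex V) (f : Finset V → ℝ) (n : ℕ) (α : Finset V →₀ 𝔽) (b : ℝ) : Prop :=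
  TrivialIn 𝔽 (sublevel K f b) n α ∧ ∀ q < b, ¬ TrivialIn 𝔽 (sublevel K f q) n α

/-- `Δ` is the terminal simplex of `[α]` in the filtration `K^f`: the simplex added
at the level where `[α]` terminates. -/
def TerminalSimplex (K : SComplex V) (f : Finset V → ℝ) (n : ℕ) (α : Finset V →₀ 𝔽)
    (Δ : Finset V) : Prop :=
  Δ ∈ K.faces ∧ TerminatesAt 𝔽 K f n α (f Δ)

/-- `Σ_ε`: the set of terminal simplices of `[α]` over all injective filtration
functions within sup-distance `ε` of `f`. -/
def TermSet (K : SComplex V) (f : Finset V → ℝ) (n : ℕ) (α : Finset V →₀ 𝔽) (ε : ℝ) :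
    Set (Finset V) :=
  {Δ | ∃ g, IsFiltrationFun K g ∧ DistLE K f g ε ∧ TerminalSimplex 𝔽 K g n α Δ}

/-- `τ` gives birth to a class in `H_n(K^f)`. -/
def IsBirthSimplex (K : SComplex V) (f : Finset V → ℝ) (n : ℕ) (τ : Finset V) : Prop :=
  τ ∈ K.faces ∧ ∃ β : Finset V →₀ 𝔽, BornAt 𝔽 K f n β (f τ)

/-- `τ` terminates a class in `H_n(K^f)`. -/
def IsTerminalSimplexOf (K : SComplex V) (f : Finset V → ℝ) (n : ℕ) (τ : Finset V) : Prop :=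
  τ ∈ K.faces ∧ ∃ (β : Finset V →₀ 𝔽) (a : ℝ),
    BornAt 𝔽 K f n β a ∧ TerminatesAt 𝔽 K f n β (f τ)

/-- The linear order on the faces of `K` induced by `g`. -/
def inducedRel (K : SComplex V) (g : Finset V → ℝ) :
    {s // s ∈ K.faces} → {s // s ∈ K.faces} → Prop :=
  fun s t => g s.1 < g t.1

/-- `Π_ε`: the set of orders on the faces of `K` induced by injective filtration
functions within sup-distance `ε` of `f`. -/
def OrderSet (K : SComplex V) (f : Finset V → ℝ) (ε : ℝ) :
    Set ({s // s ∈ K.faces} → {s // s ∈ K.faces} → Prop) :=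
  {r | ∃ g, IsFiltrationFun K g ∧ DistLE K f g ε ∧ r = inducedRel K g}

/-- `f` is generic: equal absolute differences of `f`-values occur only for the
same unordered pair of faces. -/
def Generic (K : SComplex V) (f : Finset V → ℝ) : Prop :=
  ∀ s ∈ K.faces, ∀ t ∈ K.faces, ∀ s' ∈ K.faces, ∀ t' ∈ K.faces,
    s ≠ t → s' ≠ t' → |f s - f t| = |f s' - f t'| →
    (s = s' ∧ t = t') ∨ (s = t' ∧ t = s')

/-- The rank of the map `H_n(K^f_p) → H_n(K^f_q)`, realized as the dimension of
the image of the cycles at level `p` in the quotient by boundaries at level `q`. -/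
noncomputable def persRank (K : SComplex V) (f : Finset V → ℝ) (n : ℕ) (p q : ℝ) : ℕ :=
  Module.finrank 𝔽
    ↥(Submodule.map (boundariesIn 𝔽 (sublevel K f q) n).mkQ (cyclesIn 𝔽 (sublevel K f p) n))

/-- `[a, b)` is a bar of the `n`-th persistence module of `K^f`: the standard
inclusion–exclusion of ranks equals `1` for all sufficiently small offsets. -/
def IsBar (K : SComplex V) (f : Finset V → ℝ) (n : ℕ) (a b : ℝ) : Prop :=
  a < b ∧ ∃ δ > 0, ∀ ε : ℝ, 0 < ε → ε < δ →
    persRank 𝔽 K f n a (b - ε) + persRank 𝔽 K f n (a - ε) b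
      = persRank 𝔽 K f n a b + persRank 𝔽 K f n (a - ε) (b - ε) + 1

lemma trivialIn_mono {V : Type*} [LinearOrder V] (𝔽 : Type*) [Field 𝔽]
    {L L' : Finset (Finset V)} (h : L ⊆ L') (n : ℕ) {α : Finset V →₀ 𝔽}
    (hα : TrivialIn 𝔽 L n α) : TrivialIn 𝔽 L' n α := by
  have hle : chainsIn 𝔽 L (n + 1) ≤ chainsIn 𝔽 L' (n + 1) := by
    intro c hc s hs
    exact ⟨h (hc s hs).1, (hc s hs).2⟩
  exact Submodule.map_mono hle hα

lemma sublevel_subset {V : Type*} [LinearOrder V]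
    (K : SComplex V) {f g : Finset V → ℝ} {ε : ℝ} (hd : DistLE K f g ε)
    (r : ℝ) : sublevel K g r ⊆ sublevel K f (r + ε) := by
  intro s hs
  simp only [sublevel, Finset.mem_filter] at hs ⊢
  refine ⟨hs.1, ?_⟩
  have := abs_le.mp (hd s hs.1)
  linarith [hs.2]

lemma sublevel_subset' {V : Type*} [LinearOrder V]
    (K : SComplex V) {f g : Finset V → ℝ} {ε : ℝ} (hd : DistLE K f g ε)
    (r : ℝ) : sublevel K f r ⊆ sublevel K g (r + ε) := by
  intro s hs
  simp only [sublevel, Finset.mem_filter] at hs ⊢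
  refine ⟨hs.1, ?_⟩
  have := abs_le.mp (hd s hs.1)
  linarith [hs.2]

/-- `ε ↦ |Σ_ε|` is increasing on `(0, (b-a)/2]`, and any
terminal simplex `Δ ∈ Σ_ε` satisfies `f Δ ∈ [b - 2ε, b + 2ε]`. -/
theorem stmt6 {V : Type*} [LinearOrder V] (𝔽 : Type*) [Field 𝔽]
    (K : SComplex V) (f : Finset V → ℝ) (hf : IsFiltrationFun K f)
    (n : ℕ) (α : Finset V →₀ 𝔽) (a b : ℝ)
    (hborn : BornAt 𝔽 K f n α a) (hterm : TerminatesAt 𝔽 K f n α b) :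
    (∀ ε₁ ε₂ : ℝ, 0 < ε₁ → ε₁ ≤ ε₂ → ε₂ ≤ (b - a) / 2 →
        (TermSet 𝔽 K f n α ε₁).ncard ≤ (TermSet 𝔽 K f n α ε₂).ncard) ∧
    (∀ ε : ℝ, 0 < ε → ε ≤ (b - a) / 2 →
        ∀ Δ ∈ TermSet 𝔽 K f n α ε, b - 2 * ε ≤ f Δ ∧ f Δ ≤ b + 2 * ε) := by
  constructor
  · intro ε₁ ε₂ _ h12 _
    have hsub : TermSet 𝔽 K f n α ε₁ ⊆ TermSet 𝔽 K f n α ε₂ := by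
      rintro Δ ⟨g, hg, hd, ht⟩
      exact ⟨g, hg, fun s hs => le_trans (hd s hs) h12, ht⟩
    have hfin : (TermSet 𝔽 K f n α ε₂).Finite := by
      apply Set.Finite.subset (K.faces : Finset (Finset V)).finite_toSet
      rintro Δ ⟨g, _, _, hΔ, _⟩
      exact hΔ
    exact Set.ncard_le_ncard hsub hfin
  · rintro ε hε _ Δ ⟨g, hg, hd, hΔK, htriv, hmin⟩
    have habs := abs_le.mp (hd Δ hΔK)
    -- g Δ ≤ b + ε
    have h1 : g Δ ≤ b + ε := by
      by_contra h
      push_neg at h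
      exact hmin (b + ε) h
        (trivialIn_mono 𝔽 (sublevel_subset' K hd b) n hterm.1)
    -- b ≤ g Δ + ε
    have h2 : b ≤ g Δ + ε := by
      by_contra h
      push_neg at h
      exact hterm.2 (g Δ + ε) h
        (trivialIn_mono 𝔽 (sublevel_subset K hd (g Δ)) n htriv)
    constructor <;> linarith
end

section
/- Let K be a finite simplicial complex, f an injective filtration function, and suppose [a, b) is a bar of the n-th persistence module {H_n(K^f_r)}_{r∈ℝ} represented by a class [α] born at a and terminating at b. Choose ε < (b − a)/4 and assume every other bar [a_i, b_i) of {H_n(K^f_r)} satisfies a_i > a + 2ε or b_i < b − 2ε. Let g be an injective filtration function with ‖f − g‖_∞ ≤ ε, and suppose a bottleneck matching between the barcodes of K^f and K^g (with matched endpoints differing by at most ε and unmatched bars of length at most 2ε) matches [a, b) to a bar [a', b') of {H_n(K^g_r)}. Then the class [α], viewed in the filtration K^g, terminates exactly at b'. -/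
open scoped BigOperators

variable {V : Type*} [LinearOrder V]

variable (𝔽 : Type*) [Field 𝔽]

set_option linter.unusedSectionVars false
set_option linter.unusedVariables false
section Helpers

variable {V : Type*} [LinearOrder V] (𝔽 : Type*) [Field 𝔽]

lemma chainsIn_mono {L L' : Finset (Finset V)} (h : L ⊆ L') (n : ℕ) :
    chainsIn 𝔽 L n ≤ chainsIn 𝔽 L' n := fun c hc s hs => ⟨h (hc s hs).1, (hc s hs).2⟩

lemma cyclesIn_mono {L L' : Finset (Finset V)} (h : L ⊆ L') (n : ℕ) :
    cyclesIn 𝔽 L n ≤ cyclesIn 𝔽 L' n :=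
  inf_le_inf_right _ (chainsIn_mono 𝔽 h n)

lemma boundariesIn_mono {L L' : Finset (Finset V)} (h : L ⊆ L') (n : ℕ) :
    boundariesIn 𝔽 L n ≤ boundariesIn 𝔽 L' n :=
  Submodule.map_mono (chainsIn_mono 𝔽 h _)

lemma sublevel_mono (K : SComplex V) (g : Finset V → ℝ) {p q : ℝ} (h : p ≤ q) :
    sublevel K g p ⊆ sublevel K g q := by
  intro s hs
  rw [sublevel, Finset.mem_filter] at hs ⊢
  exact ⟨hs.1, hs.2.trans h⟩

lemma mem_sublevel {K : SComplex V} {g : Finset V → ℝ} {r : ℝ} {s : Finset V} :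
    s ∈ sublevel K g r ↔ s ∈ K.faces ∧ g s ≤ r := Finset.mem_filter

lemma chainsIn_le_span (L : Finset (Finset V)) (n : ℕ) :
    chainsIn 𝔽 L n ≤ Submodule.span 𝔽 ((fun s => Finsupp.single s (1 : 𝔽)) '' (L : Set (Finset V))) := by
  intro c hc
  have hrep : c = ∑ s ∈ c.support, Finsupp.single s (c s) := by
    conv_lhs => rw [← Finsupp.sum_single c]
    rfl
  rw [hrep]
  refine Submodule.sum_mem _ (fun s hs => ?_)
  have : Finsupp.single s (c s) = (c s) • Finsupp.single s (1 : 𝔽) := by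
    rw [Finsupp.smul_single, smul_eq_mul, mul_one]
  rw [this]
  exact Submodule.smul_mem _ _ (Submodule.subset_span ⟨s, (hc s hs).1, rfl⟩)

instance chainsIn_fd (L : Finset (Finset V)) (n : ℕ) :
    FiniteDimensional 𝔽 (chainsIn 𝔽 L n) := by
  have h1 : FiniteDimensional 𝔽
      (Submodule.span 𝔽 ((fun s => Finsupp.single s (1 : 𝔽)) '' (L : Set (Finset V)))) :=
    FiniteDimensional.span_of_finite 𝔽 ((L.finite_toSet).image _)
  exact Submodule.finiteDimensional_of_le (chainsIn_le_span 𝔽 L n)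

instance cyclesIn_fd (L : Finset (Finset V)) (n : ℕ) :
    FiniteDimensional 𝔽 (cyclesIn 𝔽 L n) :=
  Submodule.finiteDimensional_of_le (inf_le_left (b := LinearMap.ker (bdry 𝔽)))

lemma finrank_map_mkQ {M : Type*} [AddCommGroup M] [Module 𝔽 M]
    (Z B : Submodule 𝔽 M) [FiniteDimensional 𝔽 Z] :
    Module.finrank 𝔽 (Z.map B.mkQ) + Module.finrank 𝔽 ↥(Z ⊓ B) = Module.finrank 𝔽 Z := by
  have h := LinearMap.finrank_range_add_finrank_ker (B.mkQ.comp Z.subtype)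
  rw [LinearMap.range_comp, Submodule.range_subtype] at h
  have hker : LinearMap.ker (B.mkQ.comp Z.subtype) = Submodule.comap Z.subtype (Z ⊓ B) := by
    ext x
    simp only [LinearMap.mem_ker, LinearMap.comp_apply, Submodule.mkQ_apply,
      Submodule.Quotient.mk_eq_zero, Submodule.mem_comap, Submodule.subtype_apply,
      Submodule.mem_inf]
    exact ⟨fun hx => ⟨x.2, hx⟩, fun hx => hx.2⟩
  rw [hker, (Submodule.comapSubtypeEquivOfLe (inf_le_left : Z ⊓ B ≤ Z)).finrank_eq] at h
  exact h

lemma persRank_eq (K : SComplex V) (g : Finset V → ℝ) (n : ℕ) (p q : ℝ) :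
    persRank 𝔽 K g n p q
      + Module.finrank 𝔽 ↥(cyclesIn 𝔽 (sublevel K g p) n ⊓ boundariesIn 𝔽 (sublevel K g q) n)
      = Module.finrank 𝔽 ↥(cyclesIn 𝔽 (sublevel K g p) n) :=
  finrank_map_mkQ 𝔽 _ _

lemma exists_gap (K : SComplex V) (g : Finset V → ℝ) (x : ℝ) :
    ∃ δ > 0, ∀ ε' : ℝ, 0 < ε' → ε' < δ →
      sublevel K g (x - ε') = K.faces.filter (fun s => g s < x) := by
  classical
  set F := (K.faces.filter (fun s => g s < x)).image g with hF
  by_cases hFne : F.Nonempty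
  · have hmax : F.max' hFne < x := by
      obtain ⟨s, hs, hgs⟩ := Finset.mem_image.mp (F.max'_mem hFne)
      obtain ⟨-, h2⟩ := Finset.mem_filter.mp hs
      exact hgs ▸ h2
    refine ⟨x - F.max' hFne, by linarith, fun ε' h0 h1 => ?_⟩
    ext s
    simp only [mem_sublevel, Finset.mem_filter]
    constructor
    · rintro ⟨h2, h3⟩
      exact ⟨h2, by linarith⟩
    · rintro ⟨h2, h3⟩
      refine ⟨h2, ?_⟩
      have : g s ≤ F.max' hFne :=
        F.le_max' _ (Finset.mem_image_of_mem g (Finset.mem_filter.mpr ⟨h2, h3⟩))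
      linarith
  · refine ⟨1, one_pos, fun ε' h0 h1 => ?_⟩
    ext s
    simp only [mem_sublevel, Finset.mem_filter]
    constructor
    · rintro ⟨h2, h3⟩
      exact ⟨h2, lt_of_le_of_lt h3 (by linarith)⟩
    · rintro ⟨h2, h3⟩
      exact absurd (Finset.mem_image_of_mem g (Finset.mem_filter.mpr ⟨h2, h3⟩))
        (by rw [← hF]; simp [Finset.not_nonempty_iff_eq_empty.mp hFne])

lemma mem_chainsIn {L : Finset (Finset V)} {n : ℕ} {c : Finset V →₀ 𝔽} :
    c ∈ chainsIn 𝔽 L n ↔ ∀ s ∈ c.support, s ∈ L ∧ s.card = n + 1 := Iff.rfl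

lemma cycle_at_top (K : SComplex V) (g : Finset V → ℝ) {n : ℕ} {α : Finset V →₀ 𝔽} {r : ℝ}
    (hz : α ∈ cyclesIn 𝔽 (sublevel K g r) n) (hα : α ≠ 0) :
    ∃ s₀, s₀ ∈ K.faces ∧ g s₀ ≤ r ∧ α ∈ cyclesIn 𝔽 (sublevel K g (g s₀)) n := by
  obtain ⟨hch, hker⟩ := Submodule.mem_inf.mp hz
  obtain ⟨s₀, hs₀, hmax⟩ := α.support.exists_max_image g (Finsupp.support_nonempty_iff.mpr hα)
  obtain ⟨hs₀sub, -⟩ := (mem_chainsIn 𝔽).mp hch s₀ hs₀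
  obtain ⟨hs₀f, hs₀r⟩ := mem_sublevel.mp hs₀sub
  refine ⟨s₀, hs₀f, hs₀r, Submodule.mem_inf.mpr ⟨(mem_chainsIn 𝔽).mpr (fun s hs => ?_), hker⟩⟩
  obtain ⟨hsub, hcard⟩ := (mem_chainsIn 𝔽).mp hch s hs
  exact ⟨mem_sublevel.mpr ⟨(mem_sublevel.mp hsub).1, hmax s hs⟩, hcard⟩

lemma boundary_at_top (K : SComplex V) (g : Finset V → ℝ) {n : ℕ} {α : Finset V →₀ 𝔽} {r : ℝ}
    (hb : α ∈ boundariesIn 𝔽 (sublevel K g r) n) (hα : α ≠ 0) :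
    ∃ s₀, s₀ ∈ K.faces ∧ g s₀ ≤ r ∧ α ∈ boundariesIn 𝔽 (sublevel K g (g s₀)) n := by
  obtain ⟨d, hd, rfl⟩ := Submodule.mem_map.mp hb
  have hd0 : d ≠ 0 := by rintro rfl; exact hα (map_zero _)
  obtain ⟨s₀, hs₀, hmax⟩ := d.support.exists_max_image g (Finsupp.support_nonempty_iff.mpr hd0)
  obtain ⟨hs₀sub, -⟩ := (mem_chainsIn 𝔽).mp hd s₀ hs₀
  obtain ⟨hs₀f, hs₀r⟩ := mem_sublevel.mp hs₀sub
  refine ⟨s₀, hs₀f, hs₀r, Submodule.mem_map.mpr ⟨d, (mem_chainsIn 𝔽).mpr (fun s hs => ?_), rfl⟩⟩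
  obtain ⟨hsub, hcard⟩ := (mem_chainsIn 𝔽).mp hd s hs
  exact ⟨mem_sublevel.mpr ⟨(mem_sublevel.mp hsub).1, hmax s hs⟩, hcard⟩

end Helpers
section Aux
variable {V : Type*} [LinearOrder V] (𝔽 : Type*) [Field 𝔽]

lemma aux_termbar (K : SComplex V) (g : Finset V → ℝ) (hg : IsFiltrationFun K g)
    (n : ℕ) (α : Finset V →₀ 𝔽) (r₀ r₁ : ℝ)
    (hz : α ∈ cyclesIn 𝔽 (sublevel K g r₀) n)
    (hnb : α ∉ boundariesIn 𝔽 (sublevel K g r₀) n)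
    (hbnd : α ∈ boundariesIn 𝔽 (sublevel K g r₁) n) :
    ∃ c b'', c ≤ r₀ ∧ b'' ≤ r₁ ∧ TerminatesAt 𝔽 K g n α b'' ∧ IsBar 𝔽 K g n c b'' := by
  classical
  have hα0 : α ≠ 0 := fun h => hnb (h ▸ Submodule.zero_mem _)
  obtain ⟨sT, hsTf, hsTr, hsTb⟩ := boundary_at_top 𝔽 K g hbnd hα0
  set Tset := K.faces.filter (fun s => α ∈ boundariesIn 𝔽 (sublevel K g (g s)) n) with hTsetdef
  have hTne : Tset.Nonempty := ⟨sT, Finset.mem_filter.mpr ⟨hsTf, hsTb⟩⟩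
  obtain ⟨sb, hsbT, hminb⟩ := Tset.exists_min_image g hTne
  obtain ⟨hsbf, hsbb⟩ := Finset.mem_filter.mp hsbT
  set b'' := g sb with hbdef
  have hbr₁ : b'' ≤ r₁ := le_trans (hminb sT (Finset.mem_filter.mpr ⟨hsTf, hsTb⟩)) hsTr
  have hterm : TerminatesAt 𝔽 K g n α b'' := by
    refine ⟨hsbb, fun q hq hqtriv => ?_⟩
    obtain ⟨s₀, hs₀f, hs₀r, hs₀b⟩ := boundary_at_top 𝔽 K g hqtriv hα0
    exact absurd (le_trans (hminb s₀ (Finset.mem_filter.mpr ⟨hs₀f, hs₀b⟩)) hs₀r)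
      (not_le.mpr hq)
  have hr₀b : r₀ < b'' := by
    by_contra h
    push_neg at h
    exact hnb (boundariesIn_mono 𝔽 (sublevel_mono K g h) n hsbb)
  obtain ⟨δb, hδb0, hgapb⟩ := exists_gap K g b''
  set Bm := boundariesIn 𝔽 (K.faces.filter (fun s => g s < b'')) n with hBm
  have hαBm : α ∉ Bm := by
    intro hmem
    refine hterm.2 (b'' - δb/2) (by linarith) ?_
    show α ∈ boundariesIn 𝔽 (sublevel K g (b'' - δb/2)) n
    rw [hgapb (δb/2) (by linarith) (by linarith)]
    exact hmem
  -- the birth set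
  obtain ⟨sα, hsαf, hsαr, hsαz⟩ := cycle_at_top 𝔽 K g hz hα0
  set Cset := K.faces.filter
    (fun s => ∃ z, z ∈ cyclesIn 𝔽 (sublevel K g (g s)) n ∧ α - z ∈ Bm) with hCsetdef
  have hsαC : sα ∈ Cset :=
    Finset.mem_filter.mpr ⟨hsαf, ⟨α, hsαz, by simpa using Submodule.zero_mem Bm⟩⟩
  obtain ⟨sc, hscC, hminc⟩ := Cset.exists_min_image g ⟨sα, hsαC⟩
  obtain ⟨hscf, z₀, hz₀cyc, hz₀B⟩ := Finset.mem_filter.mp hscC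
  set c := g sc with hcdef
  have hcr₀ : c ≤ r₀ := (hminc sα hsαC).trans hsαr
  have hcb : c < b'' := lt_of_le_of_lt hcr₀ hr₀b
  have hz₀nB : z₀ ∉ Bm := fun h => hαBm (by simpa using Submodule.add_mem _ hz₀B h)
  have hz₀0 : z₀ ≠ 0 := fun h => hαBm (by simpa [h] using hz₀B)
  obtain ⟨δc, hδc0, hgapc⟩ := exists_gap K g c
  set B₂ := boundariesIn 𝔽 (sublevel K g b'') n with hB2
  have hαB₂ : α ∈ B₂ := hsbb
  have hBmB₂ : Bm ≤ B₂ := by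
    refine boundariesIn_mono 𝔽 (fun s hs => ?_) n
    obtain ⟨h1, h2⟩ := Finset.mem_filter.mp hs
    exact mem_sublevel.mpr ⟨h1, le_of_lt h2⟩
  have hz₀B₂ : z₀ ∈ B₂ := by
    have := Submodule.sub_mem _ hαB₂ (hBmB₂ hz₀B)
    simpa using this
  set β₀ := bdry 𝔽 (Finsupp.single sb (1:𝔽)) with hβ₀
  have hB₂le : B₂ ≤ Bm ⊔ Submodule.span 𝔽 {β₀} := by
    rintro x hx
    obtain ⟨d, hd, rfl⟩ := Submodule.mem_map.mp hx
    have herase : Finsupp.erase sb d ∈ chainsIn 𝔽 (K.faces.filter (fun s => g s < b'')) (n+1) := by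
      refine (mem_chainsIn 𝔽).mpr (fun s hs => ?_)
      rw [Finsupp.support_erase] at hs
      have hsne : s ≠ sb := (Finset.mem_erase.mp hs).1
      obtain ⟨hsub, hcard⟩ := (mem_chainsIn 𝔽).mp hd s (Finset.mem_erase.mp hs).2
      obtain ⟨hsf, hsle⟩ := mem_sublevel.mp hsub
      refine ⟨Finset.mem_filter.mpr ⟨hsf, lt_of_le_of_ne hsle ?_⟩, hcard⟩
      exact fun heq => hsne (hg.2 s hsf sb hsbf heq)
    have hsplit : bdry 𝔽 d = bdry 𝔽 (Finsupp.erase sb d) + (d sb) • β₀ := by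
      conv_lhs => rw [← Finsupp.erase_add_single sb d]
      rw [map_add]
      congr 1
      rw [hβ₀, ← map_smul]
      congr 1
      rw [Finsupp.smul_single, smul_eq_mul, mul_one]
    rw [hsplit]
    exact Submodule.add_mem _
      (Submodule.mem_sup_left (Submodule.mem_map.mpr ⟨_, herase, rfl⟩))
      (Submodule.mem_sup_right (Submodule.smul_mem _ _ (Submodule.mem_span_singleton_self β₀)))
  have hB₂eq : B₂ = Bm ⊔ Submodule.span 𝔽 {z₀} := by
    apply le_antisymm
    · obtain ⟨u, hu, v, hv, huv⟩ := Submodule.mem_sup.mp (hB₂le hαB₂)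
      obtain ⟨t, rfl⟩ := Submodule.mem_span_singleton.mp hv
      have ht : t ≠ 0 := by
        rintro rfl
        rw [zero_smul, add_zero] at huv
        exact hαBm (huv ▸ hu)
      have h1 : t • β₀ = α - u := by rw [← huv]; abel
      have hβval : β₀ = t⁻¹ • (α - u) := by
        rw [← h1, smul_smul, inv_mul_cancel₀ ht, one_smul]
      have h2 : α - u ∈ Bm ⊔ Submodule.span 𝔽 {z₀} := by
        have h3 := Submodule.add_mem _
          (Submodule.mem_sup_left (Submodule.sub_mem _ hz₀B hu))
          (Submodule.mem_sup_right (Submodule.mem_span_singleton_self z₀)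
            : z₀ ∈ Bm ⊔ Submodule.span 𝔽 {z₀})
        have h4 : (α - z₀ - u) + z₀ = α - u := by abel
        rwa [h4] at h3
      have hβmem : β₀ ∈ Bm ⊔ Submodule.span 𝔽 {z₀} := by
        rw [hβval]; exact Submodule.smul_mem _ _ h2
      refine hB₂le.trans (sup_le le_sup_left ?_)
      exact Submodule.span_le.mpr (by simpa using hβmem)
    · exact sup_le hBmB₂ (Submodule.span_le.mpr (by simpa using hz₀B₂))
  set Zc := cyclesIn 𝔽 (sublevel K g c) n with hZc
  set Zm := cyclesIn 𝔽 (K.faces.filter (fun s => g s < c)) n with hZm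
  have hz₀Zc : z₀ ∈ Zc := hz₀cyc
  have hspanle : Submodule.span 𝔽 {z₀} ≤ Zc := Submodule.span_le.mpr (by simpa using hz₀Zc)
  have hW : Zc ⊓ B₂ = (Zc ⊓ Bm) ⊔ Submodule.span 𝔽 {z₀} := by
    calc Zc ⊓ B₂ = (Submodule.span 𝔽 {z₀} ⊔ Bm) ⊓ Zc := by rw [hB₂eq, inf_comm, sup_comm]
    _ = Submodule.span 𝔽 {z₀} ⊔ (Bm ⊓ Zc) := sup_inf_assoc_of_le _ hspanle
    _ = (Zc ⊓ Bm) ⊔ Submodule.span 𝔽 {z₀} := by rw [sup_comm, inf_comm]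
  haveI : FiniteDimensional 𝔽 (Zc ⊓ Bm : Submodule 𝔽 (Finset V →₀ 𝔽)) :=
    Submodule.finiteDimensional_of_le (inf_le_left.trans (le_of_eq hZc))
  have hbot : (Zc ⊓ Bm) ⊓ Submodule.span 𝔽 {z₀} = ⊥ := by
    rw [eq_bot_iff]
    intro x hx
    rw [Submodule.mem_inf, Submodule.mem_inf] at hx
    obtain ⟨⟨hx1, hx2⟩, hx3⟩ := hx
    obtain ⟨t, rfl⟩ := Submodule.mem_span_singleton.mp hx3
    rcases eq_or_ne t 0 with rfl | ht
    · simp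
    · exact absurd
        (show z₀ ∈ Bm by
          simpa [smul_smul, inv_mul_cancel₀ ht] using Submodule.smul_mem _ t⁻¹ hx2) hz₀nB
  have hWdim : Module.finrank 𝔽 ↥(Zc ⊓ B₂) = Module.finrank 𝔽 ↥(Zc ⊓ Bm) + 1 := by
    have h5 := Submodule.finrank_sup_add_finrank_inf_eq (Zc ⊓ Bm) (Submodule.span 𝔽 {z₀})
    rw [hbot, finrank_bot, finrank_span_singleton hz₀0, ← hW] at h5
    omega
  have hCle : Zm ⊓ B₂ ≤ Bm := by
    intro x hx
    rw [Submodule.mem_inf] at hx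
    obtain ⟨hxZ, hxB⟩ := hx
    rw [hB₂eq] at hxB
    obtain ⟨u, hu, v, hv, huv⟩ := Submodule.mem_sup.mp hxB
    obtain ⟨t, rfl⟩ := Submodule.mem_span_singleton.mp hv
    rcases eq_or_ne t 0 with rfl | ht
    · rw [zero_smul, add_zero] at huv
      exact huv ▸ hu
    · exfalso
      set w := t⁻¹ • x with hw
      have hwZ : w ∈ Zm := Submodule.smul_mem _ _ hxZ
      have hαw : α - w ∈ Bm := by
        have hzw : w = t⁻¹ • u + z₀ := by
          rw [hw, ← huv, smul_add, smul_smul, inv_mul_cancel₀ ht, one_smul]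
        rw [hzw]
        have h6 : α - (t⁻¹ • u + z₀) = (α - z₀) - t⁻¹ • u := by abel
        rw [h6]
        exact Submodule.sub_mem _ hz₀B (Submodule.smul_mem _ _ hu)
      have hw0 : w ≠ 0 := by
        intro h
        rw [h, sub_zero] at hαw
        exact hαBm hαw
      obtain ⟨s', hs'sup, hs'max⟩ :=
        w.support.exists_max_image g (Finsupp.support_nonempty_iff.mpr hw0)
      obtain ⟨hwch, hwker⟩ := Submodule.mem_inf.mp hwZ
      obtain ⟨hs'mem, -⟩ := (mem_chainsIn 𝔽).mp hwch s' hs'sup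
      obtain ⟨hs'f, hs'lt⟩ := Finset.mem_filter.mp hs'mem
      have hwc : w ∈ cyclesIn 𝔽 (sublevel K g (g s')) n := by
        refine Submodule.mem_inf.mpr ⟨(mem_chainsIn 𝔽).mpr (fun s hs => ?_), hwker⟩
        obtain ⟨hsub, hcard⟩ := (mem_chainsIn 𝔽).mp hwch s hs
        exact ⟨mem_sublevel.mpr ⟨(Finset.mem_filter.mp hsub).1, hs'max s hs⟩, hcard⟩
      have hs'C : s' ∈ Cset := Finset.mem_filter.mpr ⟨hs'f, ⟨w, hwc, hαw⟩⟩
      exact absurd (hminc s' hs'C) (not_le.mpr hs'lt)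
  have hCD : Zm ⊓ B₂ = Zm ⊓ Bm :=
    le_antisymm (le_inf inf_le_left hCle) (inf_le_inf_left _ hBmB₂)
  refine ⟨c, b'', hcr₀, hbr₁, hterm, hcb, min δb δc, lt_min hδb0 hδc0, fun ε' h0 h1 => ?_⟩
  have hgb := hgapb ε' h0 (h1.trans_le (min_le_left _ _))
  have hgc := hgapc ε' h0 (h1.trans_le (min_le_right _ _))
  have e1 := persRank_eq 𝔽 K g n c (b'' - ε')
  rw [hgb, ← hZc, ← hBm] at e1
  have e2 := persRank_eq 𝔽 K g n (c - ε') b''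
  rw [hgc, ← hZm, ← hB2] at e2
  have e3 := persRank_eq 𝔽 K g n c b''
  rw [← hZc, ← hB2] at e3
  have e4 := persRank_eq 𝔽 K g n (c - ε') (b'' - ε')
  rw [hgb, hgc, ← hZm, ← hBm] at e4
  have hCDdim : Module.finrank 𝔽 ↥(Zm ⊓ B₂) = Module.finrank 𝔽 ↥(Zm ⊓ Bm) := by rw [hCD]
  omega

end Aux
/-- Theorem `ThmBarcodeFinal`(1): under the separation
hypothesis on the other bars, the class `[α]`, viewed in the filtration `K^g`,
terminates exactly at the right endpoint `b'` of the matched bar. -/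
theorem stmt12 {V : Type*} [LinearOrder V] (𝔽 : Type*) [Field 𝔽]
    (K : SComplex V) (f : Finset V → ℝ) (hf : IsFiltrationFun K f)
    (n : ℕ) (α : Finset V →₀ 𝔽) (a b : ℝ)
    (hbar : IsBar 𝔽 K f n a b)
    (hborn : BornAt 𝔽 K f n α a) (hterm : TerminatesAt 𝔽 K f n α b)
    (ε : ℝ) (hε : 0 < ε) (hε4 : ε < (b - a) / 4)
    (hother : ∀ a' b' : ℝ, IsBar 𝔽 K f n a' b' → (a', b') ≠ (a, b) →
      a + 2 * ε < a' ∨ b' < b - 2 * ε)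
    (g : Finset V → ℝ) (hg : IsFiltrationFun K g) (hdist : DistLE K f g ε)
    (a' b' : ℝ)
    (hmatch : ∃ (S T : Set (ℝ × ℝ)) (φ : ℝ × ℝ → ℝ × ℝ),
      S ⊆ {p : ℝ × ℝ | IsBar 𝔽 K f n p.1 p.2} ∧
      T ⊆ {p : ℝ × ℝ | IsBar 𝔽 K g n p.1 p.2} ∧
      Set.BijOn φ S T ∧
      (∀ p ∈ S, |p.1 - (φ p).1| ≤ ε ∧ |p.2 - (φ p).2| ≤ ε) ∧
      (∀ p : ℝ × ℝ, IsBar 𝔽 K f n p.1 p.2 → p ∉ S → p.2 - p.1 ≤ 2 * ε) ∧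
      (∀ p : ℝ × ℝ, IsBar 𝔽 K g n p.1 p.2 → p ∉ T → p.2 - p.1 ≤ 2 * ε) ∧
      (a, b) ∈ S ∧ φ (a, b) = (a', b')) :
    TerminatesAt 𝔽 K g n α b' := by
  classical
  obtain ⟨S, T, φ, hS, hT, hbij, hclose, hSun, hTun, habS, hφab⟩ := hmatch
  have hfg : ∀ q : ℝ, sublevel K f q ⊆ sublevel K g (q + ε) := by
    intro q s hs
    obtain ⟨h1, h2⟩ := mem_sublevel.mp hs
    have h3 := hdist s h1
    rw [abs_le] at h3
    exact mem_sublevel.mpr ⟨h1, by linarith⟩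
  have hgf : ∀ q : ℝ, sublevel K g q ⊆ sublevel K f (q + ε) := by
    intro q s hs
    obtain ⟨h1, h2⟩ := mem_sublevel.mp hs
    have h3 := hdist s h1
    rw [abs_le] at h3
    exact mem_sublevel.mpr ⟨h1, by linarith⟩
  have hab : a < b := hbar.1
  have hz' : α ∈ cyclesIn 𝔽 (sublevel K g (a + ε)) n := cyclesIn_mono 𝔽 (hfg a) n hborn.1
  have hnb' : α ∉ boundariesIn 𝔽 (sublevel K g (a + ε)) n := by
    intro h
    exact hterm.2 (a + ε + ε) (by linarith) (boundariesIn_mono 𝔽 (hgf (a + ε)) n h)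
  have hbnd' : α ∈ boundariesIn 𝔽 (sublevel K g (b + ε)) n :=
    boundariesIn_mono 𝔽 (hfg b) n hterm.1
  obtain ⟨c, b'', hcle, hble, htermg, hbarg⟩ :=
    aux_termbar 𝔽 K g hg n α (a + ε) (b + ε) hz' hnb' hbnd'
  have hblow : b - ε ≤ b'' := by
    by_contra h
    push_neg at h
    exact hterm.2 (b'' + ε) (by linarith) (boundariesIn_mono 𝔽 (hgf b'') n htermg.1)
  by_cases hTmem : (c, b'') ∈ T
  · obtain ⟨p, hpS, hφp⟩ := hbij.2.2 hTmem
    by_cases hpab : p = (a, b)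
    · subst hpab
      rw [hφab] at hφp
      have hb'eq : b' = b'' := congrArg Prod.snd hφp
      rw [hb'eq]
      exact htermg
    · exfalso
      obtain ⟨hc1, hc2⟩ := hclose p hpS
      rw [hφp] at hc1 hc2
      have hc1' : |p.1 - c| ≤ ε := hc1
      have hc2' : |p.2 - b''| ≤ ε := hc2
      rw [abs_le] at hc1' hc2'
      have hbarf : IsBar 𝔽 K f n p.1 p.2 := hS hpS
      rcases hother p.1 p.2 hbarf (by rw [Prod.mk.eta]; exact hpab) with h | h
      · linarith [hc1'.2]
      · linarith [hc2'.1]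
  · exfalso
    have h7 : b'' - c ≤ 2 * ε := hTun (c, b'') hbarg hTmem
    linarith
end
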